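/- Let S be a finite nonempty set, let r̂ₜ : S → ℝ for t = 1,…,T with η·|r̂ₜ(u)| ≤ 1 for all u and t, let μ and pₜ be probability distributions on S, and suppose pₜ(u) = (1−γ)·qₜ(u) + γ·μ(u) where qₜ(u) ∝ exp(η ∑_{s<t} r̂ₛ(u)). Then for every u* ∈ S: ∑ₜ r̂ₜ(u*) − (ln|S|)/η ≤ (1/(1−γ))·∑ₜ ∑ᵤ pₜ(u)r̂ₜ(u) + (η/(1−γ))·∑ₜ ∑ᵤ pₜ(u)r̂ₜ(u)² − (γ/(1−γ))·∑ₜ ∑ᵤ μ(u)r̂ₜ(u). -/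

import Mathlib

lemma exp_le_one_add_add_sq {x : ℝ} (hx : |x| ≤ 1) : Real.exp x ≤ 1 + x + x ^ 2 := by
  have h := Real.exp_bound hx (n := 2) (by norm_num)
  have h2 := (abs_sub_le_iff.1 h).1
  simp [Finset.sum_range_succ] at h2
  nlinarith [sq_abs x, sq_nonneg x, abs_nonneg x, sq_nonneg (1 - |x|)]

theorem exp_weights_potential_inequality {S : Type*} [Fintype S] [Nonempty S]
    (T : ℕ) (rhat : ℕ → S → ℝ) (η γ : ℝ) (hη : 0 < η) (hγ0 : 0 ≤ γ) (hγ1 : γ < 1)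
    (hbound : ∀ t ∈ Finset.range T, ∀ u : S, η * |rhat t u| ≤ 1)
    (μ : S → ℝ) (hμ0 : ∀ u, 0 ≤ μ u) (hμ1 : ∑ u, μ u = 1)
    (p q : ℕ → S → ℝ)
    (hq : ∀ t u, q t u =
      Real.exp (η * ∑ s ∈ Finset.range t, rhat s u) /
        ∑ u', Real.exp (η * ∑ s ∈ Finset.range t, rhat s u'))
    (hp : ∀ t u, p t u = (1 - γ) * q t u + γ * μ u) :
    ∀ us : S,
      ∑ t ∈ Finset.range T, rhat t us - Real.log (Fintype.card S) / η ≤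
        (1 / (1 - γ)) * ∑ t ∈ Finset.range T, ∑ u, p t u * rhat t u +
          (η / (1 - γ)) * ∑ t ∈ Finset.range T, ∑ u, p t u * (rhat t u) ^ 2 -
          (γ / (1 - γ)) * ∑ t ∈ Finset.range T, ∑ u, μ u * rhat t u := by
  intro us
  have h1γ : (0:ℝ) < 1 - γ := by linarith
  set W : ℕ → ℝ := fun t => ∑ u, Real.exp (η * ∑ s ∈ Finset.range t, rhat s u) with hW
  have hWpos : ∀ t, 0 < W t := fun t =>
    Finset.sum_pos (fun u _ => Real.exp_pos _) Finset.univ_nonempty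
  set A : ℕ → ℝ := fun t => ∑ u, q t u * rhat t u with hA
  set B : ℕ → ℝ := fun t => ∑ u, q t u * (rhat t u) ^ 2 with hB
  -- per-step potential bound
  have hstep : ∀ t ∈ Finset.range T,
      Real.log (W (t + 1)) ≤ Real.log (W t) + (η * A t + η ^ 2 * B t) := by
    intro t ht
    have hWsucc : W (t + 1) ≤ W t * (1 + η * A t + η ^ 2 * B t) := by
      have hle : W (t + 1) ≤ ∑ u, Real.exp (η * ∑ s ∈ Finset.range t, rhat s u) *
          (1 + η * rhat t u + (η * rhat t u) ^ 2) := by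
        apply Finset.sum_le_sum
        intro u _
        rw [Finset.sum_range_succ, mul_add, Real.exp_add]
        refine mul_le_mul_of_nonneg_left ?_ (Real.exp_pos _).le
        apply exp_le_one_add_add_sq
        rw [abs_mul, abs_of_pos hη]
        exact hbound t ht u
      refine hle.trans (le_of_eq ?_)
      have hqW : ∀ u, Real.exp (η * ∑ s ∈ Finset.range t, rhat s u) = W t * q t u := by
        intro u
        rw [hq t u]
        field_simp
        rfl
      calc ∑ u, Real.exp (η * ∑ s ∈ Finset.range t, rhat s u) *
            (1 + η * rhat t u + (η * rhat t u) ^ 2)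
          = ∑ u, (W t * q t u) * (1 + η * rhat t u + (η * rhat t u) ^ 2) := by
            simp_rw [hqW]
        _ = W t * ∑ u, (q t u + η * (q t u * rhat t u) + η ^ 2 * (q t u * rhat t u ^ 2)) := by
            rw [Finset.mul_sum]; congr 1; ext u; ring
        _ = W t * ((∑ u, q t u) + η * A t + η ^ 2 * B t) := by
            rw [Finset.sum_add_distrib, Finset.sum_add_distrib, ← Finset.mul_sum,
              ← Finset.mul_sum, hA, hB]
        _ = W t * (1 + η * A t + η ^ 2 * B t) := by
            have : ∑ u, q t u = 1 := by
              simp_rw [hq t]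
              rw [← Finset.sum_div, div_self (hWpos t).ne']
            rw [this]
    have hfpos : (0:ℝ) < 1 + η * A t + η ^ 2 * B t := by
      have h1 := hWpos (t + 1)
      nlinarith [hWpos t]
    calc Real.log (W (t + 1)) ≤ Real.log (W t * (1 + η * A t + η ^ 2 * B t)) :=
          Real.log_le_log (hWpos (t + 1)) hWsucc
      _ = Real.log (W t) + Real.log (1 + η * A t + η ^ 2 * B t) :=
          Real.log_mul (hWpos t).ne' hfpos.ne'
      _ ≤ Real.log (W t) + (η * A t + η ^ 2 * B t) := by
          have := Real.log_le_sub_one_of_pos hfpos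
          linarith
  -- telescoping
  have htel : Real.log (W T) ≤ Real.log (W 0) +
      ∑ t ∈ Finset.range T, (η * A t + η ^ 2 * B t) := by
    have key : ∀ n, n ≤ T → Real.log (W n) ≤ Real.log (W 0) +
        ∑ t ∈ Finset.range n, (η * A t + η ^ 2 * B t) := by
      intro n
      induction n with
      | zero => simp
      | succ k ih =>
        intro h
        have hk := ih (Nat.le_of_succ_le h)
        have hs := hstep k (Finset.mem_range.2 (Nat.lt_of_succ_le h))
        rw [Finset.sum_range_succ]
        linarith
    exact key T le_rfl
  -- W 0
  have hW0 : Real.log (W 0) = Real.log (Fintype.card S) := by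
    simp [hW]
  -- lower bound
  have hlow : η * ∑ t ∈ Finset.range T, rhat t us ≤ Real.log (W T) := by
    have hsingle : Real.exp (η * ∑ s ∈ Finset.range T, rhat s us) ≤ W T :=
      Finset.single_le_sum (f := fun u => Real.exp (η * ∑ s ∈ Finset.range T, rhat s u))
        (fun u _ => (Real.exp_pos _).le) (Finset.mem_univ us)
    have := Real.log_le_log (Real.exp_pos _) hsingle
    rwa [Real.log_exp] at this
  -- combine
  have hkey : η * ∑ t ∈ Finset.range T, rhat t us ≤ Real.log (Fintype.card S) +
      (η * ∑ t ∈ Finset.range T, A t + η ^ 2 * ∑ t ∈ Finset.range T, B t) := by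
    have : ∑ t ∈ Finset.range T, (η * A t + η ^ 2 * B t) =
        η * ∑ t ∈ Finset.range T, A t + η ^ 2 * ∑ t ∈ Finset.range T, B t := by
      rw [Finset.sum_add_distrib, ← Finset.mul_sum, ← Finset.mul_sum]
    rw [← this, ← hW0]
    exact hlow.trans htel
  set D := ∑ t ∈ Finset.range T, ∑ u, p t u * rhat t u with hD
  set E := ∑ t ∈ Finset.range T, ∑ u, p t u * (rhat t u) ^ 2 with hE
  set F := ∑ t ∈ Finset.range T, ∑ u, μ u * rhat t u with hF
  -- relate A, B to p, μ
  have hAt : ∀ t, (1 - γ) * A t =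
      (∑ u, p t u * rhat t u) - γ * ∑ u, μ u * rhat t u := by
    intro t
    rw [hA, Finset.mul_sum, Finset.mul_sum, ← Finset.sum_sub_distrib]
    apply Finset.sum_congr rfl
    intro u _
    rw [hp t u]; ring
  have hAeq : (1 - γ) * ∑ t ∈ Finset.range T, A t = D - γ * F := by
    rw [hD, hF, Finset.mul_sum, Finset.mul_sum, ← Finset.sum_sub_distrib]
    exact Finset.sum_congr rfl fun t _ => hAt t
  have hBle : (1 - γ) * ∑ t ∈ Finset.range T, B t ≤ E := by
    rw [hE, Finset.mul_sum]
    apply Finset.sum_le_sum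
    intro t _
    rw [hB, Finset.mul_sum]
    apply Finset.sum_le_sum
    intro u _
    have h' : (1 - γ) * (q t u * rhat t u ^ 2) =
        p t u * rhat t u ^ 2 - γ * μ u * rhat t u ^ 2 := by rw [hp t u]; ring
    have hn : 0 ≤ γ * μ u * rhat t u ^ 2 :=
      mul_nonneg (mul_nonneg hγ0 (hμ0 u)) (sq_nonneg (rhat t u))
    linarith
  -- final algebra
  have hfinal : ∑ t ∈ Finset.range T, rhat t us - Real.log (Fintype.card S) / η ≤
      ∑ t ∈ Finset.range T, A t + η * ∑ t ∈ Finset.range T, B t := by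
    have h2 : η * (∑ t ∈ Finset.range T, rhat t us - Real.log (Fintype.card S) / η) ≤
        η * (∑ t ∈ Finset.range T, A t + η * ∑ t ∈ Finset.range T, B t) := by
      have e1 : η * (∑ t ∈ Finset.range T, rhat t us - Real.log (Fintype.card S) / η) =
          η * ∑ t ∈ Finset.range T, rhat t us - Real.log (Fintype.card S) := by
        field_simp
      rw [e1]
      nlinarith [hkey]
    exact le_of_mul_le_mul_left h2 hη
  have hArw : ∑ t ∈ Finset.range T, A t = (D - γ * F) / (1 - γ) := by
    rw [eq_div_iff h1γ.ne', mul_comm]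
    exact hAeq
  have hBrw : ∑ t ∈ Finset.range T, B t ≤ E / (1 - γ) := by
    rw [le_div_iff₀ h1γ]
    linarith
  have hηB : η * ∑ t ∈ Finset.range T, B t ≤ η * (E / (1 - γ)) :=
    mul_le_mul_of_nonneg_left hBrw hη.le
  have e2 : (D - γ * F) / (1 - γ) = (1 / (1 - γ)) * D - (γ / (1 - γ)) * F := by ring
  have e3 : η * (E / (1 - γ)) = (η / (1 - γ)) * E := by ring
  rw [hArw] at hfinal
  linarith
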